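/- The group PSL(3,2) (equivalently PSL(2,7)), of order 168, is minimal non-solvable: it is not solvable, but every proper subgroup is solvable. -/

import Mathlib

set_option maxRecDepth 10000
open Matrix
open scoped commutatorElement
abbrev SL3 := Matrix.SpecialLinearGroup (Fin 3) (ZMod 2)
abbrev PSL3 := Matrix.ProjectiveSpecialLinearGroup (Fin 3) (ZMod 2)

def mkSL (M : Matrix (Fin 3) (Fin 3) (ZMod 2)) (h : M.det = 1) : SL3 := ⟨M, h⟩

theorem trans_comm_id : ∀ i j k : Fin 3, i ≠ j → k ≠ i → k ≠ j →
    transvection i k (1:ZMod 2) * transvection k j 1 =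
      transvection i j 1 * (transvection k j 1 * transvection i k 1) := by decide

theorem third_index : ∀ i j : Fin 3, i ≠ j → ∃ k : Fin 3, k ≠ i ∧ k ≠ j := by decide

theorem sl3_perfect : commutator SL3 = ⊤ := by
  rw [commutator_def, eq_top_iff]
  intro A _
  have key := diagonal_transvection_induction_of_det_ne_zero
    (fun M => ∀ h : M.det = 1, mkSL M h ∈ ⁅(⊤ : Subgroup SL3), (⊤ : Subgroup SL3)⁆)
    A.1 (by rw [A.2]; exact one_ne_zero) ?_ ?_ ?_ A.2
  · have : A = mkSL A.1 A.2 := Subtype.ext rfl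
    rw [this]; exact key
  · -- diagonal
    intro D hD h
    have hD1 : mkSL (diagonal D) h = 1 := by
      apply Subtype.ext
      show diagonal D = 1
      have h1 : ∀ d : ZMod 2, d ≠ 0 → d = 1 := by decide
      have : ∀ i, D i = 1 := fun i => h1 _ fun h0 => hD
        (by rw [det_diagonal]; exact Finset.prod_eq_zero (Finset.mem_univ i) h0)
      rw [show D = fun _ => 1 from funext this, diagonal_one]
    rw [hD1]; exact Subgroup.one_mem _
  · -- transvection
    rintro ⟨i, j, hij, c⟩ h
    rcases (show ∀ c : ZMod 2, c = 0 ∨ c = 1 by decide) c with rfl | rfl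
    · have : mkSL _ h = 1 := Subtype.ext (show transvection i j (0:ZMod 2) = 1 from transvection_zero i j)
      rw [this]; exact Subgroup.one_mem _
    · obtain ⟨k, hki, hkj⟩ := third_index i j hij
      have deta : (transvection i k (1:ZMod 2)).det = 1 := det_transvection_of_ne _ _ (Ne.symm hki) _
      have detb : (transvection k j (1:ZMod 2)).det = 1 := det_transvection_of_ne _ _ hkj _
      have hab : mkSL _ deta * mkSL _ detb = mkSL _ h * (mkSL _ detb * mkSL _ deta) :=
        Subtype.ext (trans_comm_id i j k hij hki hkj)
      have hc : ⁅mkSL _ deta, mkSL _ detb⁆ = mkSL _ h := by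
        rw [commutatorElement_def, hab]
        group
      rw [← hc]
      exact Subgroup.commutator_mem_commutator (Subgroup.mem_top _) (Subgroup.mem_top _)
  · -- mul
    intro M N _ _ hM hN h
    have h2 : ∀ x y : ZMod 2, x * y = 1 → x = 1 ∧ y = 1 := by decide
    obtain ⟨hM1, hN1⟩ := h2 M.det N.det (by rw [← det_mul]; exact h)
    have : mkSL _ h = mkSL M hM1 * mkSL N hN1 := Subtype.ext rfl
    rw [this]
    exact Subgroup.mul_mem _ (hM hM1) (hN hN1)

theorem psl_perfect : commutator PSL3 = ⊤ := by
  have hs : Function.Surjective (QuotientGroup.mk' (Subgroup.center SL3)) :=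
    QuotientGroup.mk'_surjective _
  rw [commutator_def, ← Subgroup.map_top_of_surjective _ hs, ← Subgroup.map_commutator,
    ← commutator_def, sl3_perfect, Subgroup.map_top_of_surjective _ hs]

theorem card_psl : Nat.card PSL3 = 168 := by
  have h := Subgroup.card_eq_card_quotient_mul_card_subgroup (Subgroup.center SL3)
  have h1 : Nat.card SL3 = 168 := by rw [Nat.card_eq_fintype_card]; decide
  have h2 : Nat.card (Subgroup.center SL3) = 1 := by
    rw [show Subgroup.center SL3 = ⊥ from ?_]
    · exact Subgroup.card_bot
    · rw [eq_bot_iff]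
      intro A hA
      rw [Matrix.SpecialLinearGroup.mem_center_iff] at hA
      obtain ⟨r, hr, hA⟩ := hA
      have h1 : ∀ s : ZMod 2, s ^ Fintype.card (Fin 3) = 1 → s = 1 := by decide
      have hr1 := h1 r hr
      subst hr1
      simp only [Subgroup.mem_bot]
      apply Subtype.ext
      rw [← hA]
      simp
  rw [h1, h2, mul_one] at h
  exact h.symm

theorem psl_not_solvable : ¬ IsSolvable PSL3 := by
  have hd : ∀ n, derivedSeries PSL3 n = ⊤ := by
    intro n; induction n with
    | zero => rfl
    | succ n ih => rw [derivedSeries_succ, ih, ← commutator_def, psl_perfect]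
  have : Nontrivial PSL3 := by
    have : Finite PSL3 := Nat.finite_of_card_ne_zero (by rw [card_psl]; norm_num)
    rw [← Finite.one_lt_card_iff_nontrivial, card_psl]; norm_num
  obtain ⟨g, hg⟩ := exists_ne (1 : PSL3)
  exact not_solvable_of_mem_derivedSeries hg fun n => (hd n).symm ▸ Subgroup.mem_top g

section Helpers
variable {G : Type} [Group G]

theorem ext_solvable (N : Subgroup G) [N.Normal]
    (h1 : IsSolvable N) (h2 : IsSolvable (G ⧸ N)) : IsSolvable G := by
  haveI : Group.IsSolvable N := h1; haveI : Group.IsSolvable (G ⧸ N) := h2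
  exact solvable_of_ker_le_range N.subtype (QuotientGroup.mk' N)
    (by rw [QuotientGroup.ker_mk', Subgroup.range_subtype])

theorem sol_pp (p k : ℕ) (hp : p.Prime) (h : Nat.card G = p ^ k) : IsSolvable G := by
  have : Finite G := Nat.finite_of_card_ne_zero (h ▸ pow_ne_zero k hp.pos.ne')
  have : Fact p.Prime := ⟨hp⟩
  have hPG : IsPGroup p G := IsPGroup.of_card h
  have := hPG.isNilpotent
  exact (inferInstance : Group.IsSolvable G)

theorem sylow_normal [Finite G] (p : ℕ) [Fact p.Prime] (P : Sylow p G)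
    (h : Nat.card (Sylow p G) = 1) : (P : Subgroup G).Normal := by
  have hs : Subsingleton (Sylow p G) := by
    rw [Nat.card_eq_one_iff_unique] at h
    exact h.1
  rw [← Subgroup.normalizer_eq_top_iff, eq_top_iff]
  intro g _
  exact Sylow.smul_eq_iff_mem_normalizer.mp (Subsingleton.elim _ _)

theorem card_sylow_prime [Finite G] (p : ℕ) [Fact p.Prime] (P : Sylow p G)
    (hdvd : p ∣ Nat.card G) (h2 : ¬ (p * p) ∣ Nat.card G) : Nat.card P = p := by
  obtain ⟨k, hk⟩ := IsPGroup.iff_card.mp P.isPGroup'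
  have hdvd' : p ∣ Nat.card P := P.dvd_card_of_dvd_card hdvd
  have hdc := Subgroup.card_subgroup_dvd_card (P : Subgroup G)
  rw [show Nat.card (P : Subgroup G) = Nat.card P from rfl, hk] at hdc
  rw [hk] at hdvd' ⊢
  have hp := (Fact.out : p.Prime)
  have hk1 : k ≠ 0 := by
    rintro rfl
    exact hp.ne_one (Nat.dvd_one.mp (by simpa using hdvd'))
  have hk2 : k < 2 := by
    by_contra hc
    push_neg at hc
    obtain ⟨l, rfl⟩ := Nat.exists_eq_add_of_le hc
    exact h2 (dvd_trans ⟨p ^ l, by ring⟩ hdc)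
  have : k = 1 := by omega
  rw [this, pow_one]
end Helpers

theorem sylow_count_one (G : Type) [Group G] [Finite G] (p m : ℕ) [Fact p.Prime]
    (hG : Nat.card G = p * m) (hm : ¬ p ∣ m) (hm0 : m ≠ 0)
    (hmod : ∀ d, d ∣ m → d % p = 1 % p → d = 1) : Nat.card (Sylow p G) = 1 := by
  have hp := (Fact.out : p.Prime)
  have P : Sylow p G := default
  have hPcard : Nat.card P = p := card_sylow_prime p P ⟨m, hG⟩
    (fun ⟨c, hc⟩ => hm ⟨c, by
      have hp0 : 0 < p := hp.pos
      rw [hG] at hc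
      exact Nat.eq_of_mul_eq_mul_left hp0 (by linarith [hc])⟩)
  have hidx : (P : Subgroup G).index = m := by
    have h1 := Subgroup.card_mul_index (P : Subgroup G)
    rw [hG] at h1
    rw [show Nat.card (P : Subgroup G) = Nat.card P from rfl, hPcard] at h1
    exact Nat.eq_of_mul_eq_mul_left hp.pos h1
  have hd : Nat.card (Sylow p G) ∣ m := hidx ▸ P.card_dvd_index
  have hmod1 : Nat.card (Sylow p G) % p = 1 % p := card_sylow_modEq_one p G
  exact hmod _ hd hmod1

theorem sol_of_sylow_normal (G : Type) [Group G] (p m : ℕ) (hp : p.Prime)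
    (hG : Nat.card G = p * m) (hm : ¬ p ∣ m) (hm0 : m ≠ 0)
    (h1 : Nat.card (Sylow p G) = 1)
    (hsolm : ∀ (Q : Type) [Group Q], Nat.card Q = m → IsSolvable Q) :
    IsSolvable G := by
  have : Fact p.Prime := ⟨hp⟩
  have : Finite G := Nat.finite_of_card_ne_zero (by rw [hG]; exact Nat.mul_ne_zero hp.pos.ne' hm0)
  have P : Sylow p G := default
  have hnorm : (P : Subgroup G).Normal := sylow_normal p P h1
  have hPcard : Nat.card (P : Subgroup G) = p := card_sylow_prime p P ⟨m, hG⟩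
    (fun ⟨c, hc⟩ => hm ⟨c, by
      rw [hG] at hc
      exact Nat.eq_of_mul_eq_mul_left hp.pos (by linarith [hc])⟩)
  have hq : Nat.card (G ⧸ (P : Subgroup G)) = m := by
    have h1 := Subgroup.card_mul_index (P : Subgroup G)
    rw [hG, hPcard, Subgroup.index_eq_card] at h1
    exact Nat.eq_of_mul_eq_mul_left hp.pos h1
  exact ext_solvable (P : Subgroup G) (sol_pp p 1 hp (by rw [pow_one]; exact hPcard)) (hsolm _ hq)

theorem sol6 (G : Type) [Group G] (h : Nat.card G = 6) : IsSolvable G := by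
  have : Finite G := Nat.finite_of_card_ne_zero (by omega)
  have : Fact (Nat.Prime 3) := ⟨by norm_num⟩
  refine sol_of_sylow_normal G 3 2 (by norm_num) (by omega) (by norm_num) (by norm_num)
    (sylow_count_one G 3 2 (by omega) (by norm_num) (by norm_num) ?_)
    (fun Q _ hQ => sol_pp 2 1 (by norm_num) (by simpa using hQ))
  intro d hd hmod
  have hle := Nat.le_of_dvd (by norm_num) hd
  interval_cases d <;> omega

def V4 : Subgroup (Equiv.Perm (Fin 4)) where
  carrier := {σ | σ = 1 ∨ σ = Equiv.swap 0 1 * Equiv.swap 2 3 ∨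
    σ = Equiv.swap 0 2 * Equiv.swap 1 3 ∨ σ = Equiv.swap 0 3 * Equiv.swap 1 2}
  one_mem' := Or.inl rfl
  mul_mem' := by decide
  inv_mem' := by decide

instance : DecidablePred (· ∈ V4) := fun σ =>
  decidable_of_iff (σ = 1 ∨ σ = Equiv.swap 0 1 * Equiv.swap 2 3 ∨
    σ = Equiv.swap 0 2 * Equiv.swap 1 3 ∨ σ = Equiv.swap 0 3 * Equiv.swap 1 2) Iff.rfl

instance : V4.Normal := by
  constructor
  intro n hn g
  have hn' : n = 1 ∨ n = Equiv.swap 0 1 * Equiv.swap 2 3 ∨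
      n = Equiv.swap 0 2 * Equiv.swap 1 3 ∨ n = Equiv.swap 0 3 * Equiv.swap 1 2 := hn
  show g * n * g⁻¹ = 1 ∨ g * n * g⁻¹ = Equiv.swap 0 1 * Equiv.swap 2 3 ∨
      g * n * g⁻¹ = Equiv.swap 0 2 * Equiv.swap 1 3 ∨ g * n * g⁻¹ = Equiv.swap 0 3 * Equiv.swap 1 2
  revert hn'
  revert n g
  decide

theorem solS4 : IsSolvable (Equiv.Perm (Fin 4)) := by
  have hV : Nat.card V4 = 4 := by rw [Nat.card_eq_fintype_card]; decide
  have hS : Nat.card (Equiv.Perm (Fin 4)) = 24 := by rw [Nat.card_eq_fintype_card]; decide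
  have hq : Nat.card (Equiv.Perm (Fin 4) ⧸ V4) = 6 := by
    have h1 := Subgroup.card_mul_index V4
    rw [hV, hS, Subgroup.index_eq_card] at h1
    omega
  exact ext_solvable V4 (sol_pp 2 2 (by norm_num) (by rw [hV]; norm_num)) (sol6 _ hq)

theorem sol_engine4 (G : Type) [Group G] [Finite G] (n : ℕ) (hG : Nat.card G = n)
    (hn168 : n ∣ 168) (h4 : Nat.card (Sylow 3 G) = 4)
    (IH : ∀ m, m < n → m ∣ 168 → m ≠ 168 →
      ∀ (Q : Type) [Group Q], Nat.card Q = m → IsSolvable Q) :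
    IsSolvable G := by
  have : Fact (Nat.Prime 3) := ⟨by norm_num⟩
  set φ := MulAction.toPermHom G (Sylow 3 G) with hφ
  have hKne : φ.ker ≠ ⊤ := by
    have : Nontrivial (Sylow 3 G) := by
      rw [← Finite.one_lt_card_iff_nontrivial, h4]; norm_num
    obtain ⟨P, Q, hPQ⟩ := exists_pair_ne (Sylow 3 G)
    obtain ⟨g, hg⟩ := MulAction.exists_smul_eq G P Q
    intro htop
    have hgK : g ∈ φ.ker := htop ▸ Subgroup.mem_top g
    rw [MonoidHom.mem_ker] at hgK
    apply hPQ
    calc P = φ g P := by rw [hgK]; rfl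
    _ = g • P := rfl
    _ = Q := hg
  have hKcard : Nat.card φ.ker < n := by
    have hdvd := Subgroup.card_subgroup_dvd_card φ.ker
    rw [hG] at hdvd
    have hne : Nat.card φ.ker ≠ n := fun h => hKne (Subgroup.eq_top_of_card_eq _ (by rw [h, hG]))
    have hn0 : 0 < n := by
      rw [← hG]
      exact Nat.card_pos
    exact lt_of_le_of_ne (Nat.le_of_dvd hn0 hdvd) hne
  have hn168' : n ≤ 168 := Nat.le_of_dvd (by norm_num) hn168
  have hsolK : IsSolvable φ.ker := by
    refine IH _ hKcard ?_ (by omega) _ rfl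
    exact dvd_trans (hG ▸ Subgroup.card_subgroup_dvd_card φ.ker) hn168
  have hsolPerm : IsSolvable (Equiv.Perm (Sylow 3 G)) := by
    obtain ⟨e⟩ : Nonempty (Sylow 3 G ≃ Fin 4) := by
      rw [← Finite.card_eq]
      simp [h4]
    haveI : Group.IsSolvable (Equiv.Perm (Fin 4)) := solS4
    exact solvable_of_solvable_injective (Equiv.Perm.viaEmbeddingHom_injective e.toEmbedding)
  have hsolQ : IsSolvable (G ⧸ φ.ker) := by
    haveI : Group.IsSolvable (Equiv.Perm (Sylow 3 G)) := hsolPerm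
    exact solvable_of_solvable_injective (QuotientGroup.kerLift_injective φ)
  exact ext_solvable φ.ker hsolK hsolQ

theorem sol_easy (G : Type) [Group G] (p m : ℕ) (hp : p.Prime)
    (hG : Nat.card G = p * m) (hm : ¬ p ∣ m) (hm0 : m ≠ 0)
    (hmod : ∀ d, d ∣ m → d % p = 1 % p → d = 1)
    (hsolm : ∀ (Q : Type) [Group Q], Nat.card Q = m → IsSolvable Q) : IsSolvable G := by
  have : Fact p.Prime := ⟨hp⟩
  have : Finite G := Nat.finite_of_card_ne_zero
    (by rw [hG]; exact Nat.mul_ne_zero hp.pos.ne' hm0)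
  exact sol_of_sylow_normal G p m hp hG hm hm0 (sylow_count_one G p m hG hm hm0 hmod) hsolm

theorem sol56 (G : Type) [Group G] (hG : Nat.card G = 56) : IsSolvable G := by
  have : Finite G := Nat.finite_of_card_ne_zero (by omega)
  have : Fact (Nat.Prime 7) := ⟨by norm_num⟩
  have P : Sylow 7 G := default
  have hPcard : Nat.card (P : Subgroup G) = 7 :=
    card_sylow_prime 7 P (by rw [hG]; norm_num) (by rw [hG]; norm_num)
  have hidx : (P : Subgroup G).index = 8 := by
    have h1 := Subgroup.card_mul_index (P : Subgroup G)
    rw [hPcard, hG] at h1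
    omega
  have hd : Nat.card (Sylow 7 G) ∣ 8 := hidx ▸ P.card_dvd_index
  have hmod : Nat.card (Sylow 7 G) % 7 = 1 % 7 := card_sylow_modEq_one 7 G
  have h18 : Nat.card (Sylow 7 G) = 1 ∨ Nat.card (Sylow 7 G) = 8 := by
    have hle := Nat.le_of_dvd (by norm_num) hd
    interval_cases (Nat.card (Sylow 7 G)) <;> omega
  rcases h18 with h1 | h8
  · exact sol_of_sylow_normal G 7 8 (by norm_num) (hG.trans (by norm_num)) (by norm_num)
      (by norm_num) h1 (fun Q _ hQ => sol_pp 2 3 (by norm_num) (hQ.trans (by norm_num)))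
  · have hidxn : (Subgroup.normalizer (P : Set G)).index = 8 := by
      rw [← Sylow.card_eq_index_normalizer]; exact h8
    have hcardN : Nat.card (Subgroup.normalizer (P : Set G)) = 7 := by
      have h1 := Subgroup.card_mul_index (Subgroup.normalizer (P : Set G))
      rw [hidxn, hG] at h1
      omega
    have hPN : (P : Subgroup G) = (Subgroup.normalizer (P : Set G)) :=
      Subgroup.eq_of_le_of_card_ge Subgroup.le_normalizer (by rw [hcardN, hPcard])
    have hcyc : IsCyclic (P : Subgroup G) := isCyclic_of_prime_card hPcard
    letI := hcyc.commGroup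
    haveI : IsMulCommutative (P : Subgroup G) := ⟨⟨fun a b => mul_comm a b⟩⟩
    have hle : (Subgroup.normalizer (P : Set G)) ≤ Subgroup.centralizer (P : Subgroup G) :=
      hPN ▸ Subgroup.le_centralizer (P : Subgroup G)
    have hcompl := MonoidHom.ker_transferSylow_isComplement' P hle
    have hKcard : Nat.card (MonoidHom.transferSylow P hle).ker = 8 := by
      have h1 := hcompl.card_mul
      rw [hG] at h1
      rw [show Nat.card (P : Subgroup G) = 7 from hPcard] at h1
      omega
    have hKidx : (MonoidHom.transferSylow P hle).ker.index = 7 := by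
      have h1 := Subgroup.card_mul_index (MonoidHom.transferSylow P hle).ker
      rw [hKcard, hG] at h1
      omega
    refine ext_solvable (MonoidHom.transferSylow P hle).ker
      (sol_pp 2 3 (by norm_num) (hKcard.trans (by norm_num))) ?_
    refine sol_pp 7 1 (by norm_num) ?_
    rw [← Subgroup.index_eq_card, hKidx]
    norm_num

theorem sol168 : ∀ n : ℕ, n ∣ 168 → n ≠ 168 →
    ∀ (G : Type) [Group G], Nat.card G = n → IsSolvable G := by
  intro n
  induction n using Nat.strong_induction_on with
  | _ n IH =>
  intro hdvd hne G _ hG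
  have hn0 : n ≠ 0 := by rintro rfl; omega
  have : Finite G := Nat.finite_of_card_ne_zero (by omega)
  have hcases : n = 1 ∨ n = 2 ∨ n = 3 ∨ n = 4 ∨ n = 6 ∨ n = 7 ∨ n = 8 ∨ n = 12 ∨ n = 14 ∨
      n = 21 ∨ n = 24 ∨ n = 28 ∨ n = 42 ∨ n = 56 ∨ n = 84 := by
    have hle := Nat.le_of_dvd (by norm_num) hdvd
    interval_cases n <;> omega
  rcases hcases with rfl | rfl | rfl | rfl | rfl | rfl | rfl | rfl | rfl | rfl | rfl | rfl | rfl | rfl | rfl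
  · haveI : Subsingleton G := (Nat.card_eq_one_iff_unique.mp hG).1
    exact (inferInstance : Group.IsSolvable G)
  · exact sol_pp 2 1 (by norm_num) (hG.trans (by norm_num))
  · exact sol_pp 3 1 (by norm_num) (hG.trans (by norm_num))
  · exact sol_pp 2 2 (by norm_num) (hG.trans (by norm_num))
  · exact sol6 G hG
  · exact sol_pp 7 1 (by norm_num) (hG.trans (by norm_num))
  · exact sol_pp 2 3 (by norm_num) (hG.trans (by norm_num))
  · -- n = 12
    haveI : Fact (Nat.Prime 3) := ⟨by norm_num⟩
    have P : Sylow 3 G := default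
    have hPcard : Nat.card (P : Subgroup G) = 3 :=
      card_sylow_prime 3 P (by rw [hG]; norm_num) (by rw [hG]; norm_num)
    have hidx : (P : Subgroup G).index = 4 := by
      have h1 := Subgroup.card_mul_index (P : Subgroup G)
      rw [hPcard, hG] at h1
      omega
    have hd : Nat.card (Sylow 3 G) ∣ 4 := hidx ▸ P.card_dvd_index
    have hmod : Nat.card (Sylow 3 G) % 3 = 1 % 3 := card_sylow_modEq_one 3 G
    have h14 : Nat.card (Sylow 3 G) = 1 ∨ Nat.card (Sylow 3 G) = 4 := by
      have hle := Nat.le_of_dvd (by norm_num) hd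
      interval_cases (Nat.card (Sylow 3 G)) <;> omega
    rcases h14 with h1 | h4
    · exact sol_of_sylow_normal G 3 4 (by norm_num) (hG.trans (by norm_num)) (by norm_num)
        (by norm_num) h1 (fun Q _ hQ => sol_pp 2 2 (by norm_num) (hQ.trans (by norm_num)))
    · exact sol_engine4 G 12 hG (by norm_num) h4 (fun m hm hd' hne' Q _ hQ => IH m (by omega) hd' hne' Q hQ)
  · exact sol_easy G 7 2 (by norm_num) (hG.trans (by norm_num)) (by norm_num) (by norm_num)
      (by intro d hd hm; have := Nat.le_of_dvd (by norm_num) hd; interval_cases d <;> omega)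
      (fun Q _ hQ => sol_pp 2 1 (by norm_num) (hQ.trans (by norm_num)))
  · exact sol_easy G 7 3 (by norm_num) (hG.trans (by norm_num)) (by norm_num) (by norm_num)
      (by intro d hd hm; have := Nat.le_of_dvd (by norm_num) hd; interval_cases d <;> omega)
      (fun Q _ hQ => sol_pp 3 1 (by norm_num) (hQ.trans (by norm_num)))
  · -- n = 24
    haveI : Fact (Nat.Prime 3) := ⟨by norm_num⟩
    have P : Sylow 3 G := default
    have hPcard : Nat.card (P : Subgroup G) = 3 :=
      card_sylow_prime 3 P (by rw [hG]; norm_num) (by rw [hG]; norm_num)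
    have hidx : (P : Subgroup G).index = 8 := by
      have h1 := Subgroup.card_mul_index (P : Subgroup G)
      rw [hPcard, hG] at h1
      omega
    have hd : Nat.card (Sylow 3 G) ∣ 8 := hidx ▸ P.card_dvd_index
    have hmod : Nat.card (Sylow 3 G) % 3 = 1 % 3 := card_sylow_modEq_one 3 G
    have h14 : Nat.card (Sylow 3 G) = 1 ∨ Nat.card (Sylow 3 G) = 4 := by
      have hle := Nat.le_of_dvd (by norm_num) hd
      interval_cases (Nat.card (Sylow 3 G)) <;> omega
    rcases h14 with h1 | h4
    · exact sol_of_sylow_normal G 3 8 (by norm_num) (hG.trans (by norm_num)) (by norm_num)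
        (by norm_num) h1 (fun Q _ hQ => sol_pp 2 3 (by norm_num) (hQ.trans (by norm_num)))
    · exact sol_engine4 G 24 hG (by norm_num) h4 (fun m hm hd' hne' Q _ hQ => IH m (by omega) hd' hne' Q hQ)
  · exact sol_easy G 7 4 (by norm_num) (hG.trans (by norm_num)) (by norm_num) (by norm_num)
      (by intro d hd hm; have := Nat.le_of_dvd (by norm_num) hd; interval_cases d <;> omega)
      (fun Q _ hQ => sol_pp 2 2 (by norm_num) (hQ.trans (by norm_num)))
  · exact sol_easy G 7 6 (by norm_num) (hG.trans (by norm_num)) (by norm_num) (by norm_num)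
      (by intro d hd hm; have := Nat.le_of_dvd (by norm_num) hd; interval_cases d <;> omega)
      (fun Q _ hQ => sol6 Q hQ)
  · exact sol56 G hG
  · exact sol_easy G 7 12 (by norm_num) (hG.trans (by norm_num)) (by norm_num) (by norm_num)
      (by intro d hd hm; have := Nat.le_of_dvd (by norm_num) hd; interval_cases d <;> omega)
      (fun Q _ hQ => IH 12 (by omega) (by norm_num) (by norm_num) Q hQ)

theorem PSL32_mns :
    Nat.card (Matrix.ProjectiveSpecialLinearGroup (Fin 3) (ZMod 2)) = 168 ∧
    ¬ IsSolvable (Matrix.ProjectiveSpecialLinearGroup (Fin 3) (ZMod 2)) ∧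
    ∀ H : Subgroup (Matrix.ProjectiveSpecialLinearGroup (Fin 3) (ZMod 2)),
      H ≠ ⊤ → IsSolvable H := by
  refine ⟨card_psl, psl_not_solvable, ?_⟩
  intro H hH
  have hfin : Finite PSL3 := Nat.finite_of_card_ne_zero (by rw [card_psl]; norm_num)
  have hd : Nat.card H ∣ 168 := card_psl ▸ Subgroup.card_subgroup_dvd_card H
  have hne : Nat.card H ≠ 168 := fun h => hH (Subgroup.eq_top_of_card_eq H (h.trans card_psl.symm))
  exact sol168 _ hd hne H rfl
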